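/- Let G be a group acting by homeomorphisms on compact Hausdorff spaces W₁ and W₂, and let A₁ ⊆ W₁ and A₂ ⊆ W₂ be open G-invariant subsets on which G acts properly discontinuously (for all compact K, L contained in A_i, the set {g ∈ G : g·K ∩ L ≠ ∅} is finite) and cocompactly (there is a compact K ⊆ A_i with G·K = A_i). Say the pair (W_i, A_i) is perspective if for every entourage u of the unique uniform structure of W_i and every compact K ⊆ A_i, the set {g ∈ G : g·K is not u-small} is finite (a set S is u-small if S × S ⊆ u). Let f : W₁ → W₂ be a continuous G-equivariant map with f(A₁) ⊆ A₂ that is injective on W₁ ∖ A₁. If (W₂, A₂) is perspective, then (W₁, A₁) is perspective. -/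

import Mathlib

open Pointwise

/-- The pair `(W, A)` (a `G`-space `W` with an invariant subset `A` on which `G` acts
properly discontinuously and cocompactly) is *perspective* if for every entourage `u`
of the (unique) uniform structure of `W` and every compact `K ⊆ A`, only finitely
many `g ∈ G` have `g • K` not `u`-small (`S` is `u`-small if `S ×ˢ S ⊆ u`). -/
def PerspectivePair (G : Type*) {W : Type*} [Group G] [UniformSpace W]
    [MulAction G W] (A : Set W) : Prop :=
  ∀ u ∈ uniformity W, ∀ K : Set W, IsCompact K → K ⊆ A →
    {g : G | ¬(g • K) ×ˢ (g • K) ⊆ u}.Finite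

/-- Let `G` act by homeomorphisms on compact Hausdorff spaces
`W₁, W₂` with open invariant subsets `A₁, A₂` on which `G` acts properly
discontinuously and cocompactly, and let `f : W₁ → W₂` be continuous, equivariant,
with `f(A₁) ⊆ A₂` and injective on `W₁ ∖ A₁`. If `(W₂, A₂)` is perspective then so is
`(W₁, A₁)`. -/
theorem perspective_pullback {G W₁ W₂ : Type*} [Group G]
    [UniformSpace W₁] [CompactSpace W₁] [T2Space W₁]
    [UniformSpace W₂] [CompactSpace W₂] [T2Space W₂]
    [MulAction G W₁] [MulAction G W₂]
    [ContinuousConstSMul G W₁] [ContinuousConstSMul G W₂]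
    (A₁ : Set W₁) (A₂ : Set W₂)
    (hA₁open : IsOpen A₁) (hA₂open : IsOpen A₂)
    (hA₁inv : ∀ g : G, g • A₁ = A₁) (hA₂inv : ∀ g : G, g • A₂ = A₂)
    (hpd₁ : ∀ K L : Set W₁, IsCompact K → IsCompact L → K ⊆ A₁ → L ⊆ A₁ →
      {g : G | ((g • K) ∩ L).Nonempty}.Finite)
    (hpd₂ : ∀ K L : Set W₂, IsCompact K → IsCompact L → K ⊆ A₂ → L ⊆ A₂ →
      {g : G | ((g • K) ∩ L).Nonempty}.Finite)
    (hcc₁ : ∃ K : Set W₁, IsCompact K ∧ K ⊆ A₁ ∧ (⋃ g : G, g • K) = A₁)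
    (hcc₂ : ∃ K : Set W₂, IsCompact K ∧ K ⊆ A₂ ∧ (⋃ g : G, g • K) = A₂)
    (f : W₁ → W₂) (hfc : Continuous f)
    (hfe : ∀ (g : G) (x : W₁), f (g • x) = g • f x)
    (hfA : f '' A₁ ⊆ A₂) (hfinj : Set.InjOn f A₁ᶜ)
    (hp₂ : PerspectivePair G A₂) :
    PerspectivePair G A₁ := by
  intro u hu K hK hKA
  rw [← Set.not_infinite]
  intro hSinf
  set S : Set G := {g : G | ¬(g • K) ×ˢ (g • K) ⊆ u} with hSdef
  -- K is nonempty (else S = ∅)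
  rcases K.eq_empty_or_nonempty with rfl | hKne
  · have : S = ∅ := by
      ext g; simp [hSdef]
    rw [this] at hSinf
    exact hSinf Set.finite_empty
  have : Nonempty W₁ := ⟨hKne.choose⟩
  -- choose witness pairs for each bad g
  have hwit : ∀ g : G, ∃ q : W₁ × W₁, g ∈ S →
      q.1 ∈ g • K ∧ q.2 ∈ g • K ∧ q ∉ u := by
    intro g
    by_cases hg : g ∈ S
    · obtain ⟨q, hq, hqu⟩ := Set.not_subset.mp hg
      exact ⟨q, fun _ => ⟨(Set.mem_prod.mp hq).1, (Set.mem_prod.mp hq).2, hqu⟩⟩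
    · exact ⟨(Classical.arbitrary W₁, Classical.arbitrary W₁), fun h => absurd h hg⟩
  choose q hq using hwit
  -- an ultrafilter finer than cofinite, containing S
  have hne : (Filter.cofinite ⊓ Filter.principal S).NeBot := by
    rw [Filter.inf_principal_neBot_iff]
    intro T hT
    have : (S \ Tᶜ).Infinite := hSinf.diff hT
    obtain ⟨g, hgS, hgT⟩ := this.nonempty
    exact ⟨g, by simpa using hgT, hgS⟩
  set U : Ultrafilter G := Ultrafilter.of (Filter.cofinite ⊓ Filter.principal S) with hUdef
  have hUle : (U : Filter G) ≤ Filter.cofinite ⊓ Filter.principal S :=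
    Ultrafilter.of_le _
  have hUcof : (U : Filter G) ≤ Filter.cofinite := hUle.trans inf_le_left
  have hUS : S ∈ U := hUle (Filter.mem_inf_of_right (Filter.mem_principal_self S))
  -- every finite set is U-negligible
  have hUfin : ∀ T : Set G, T.Finite → Tᶜ ∈ U := fun T hT =>
    hUcof hT.compl_mem_cofinite
  -- limits of the witness nets
  obtain ⟨x₀, -, hx₀⟩ := isCompact_univ.ultrafilter_le_nhds (U.map fun g => (q g).1)
    (by simp)
  obtain ⟨y₀, -, hy₀⟩ := isCompact_univ.ultrafilter_le_nhds (U.map fun g => (q g).2)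
    (by simp)
  have hx₀t : Filter.Tendsto (fun g => (q g).1) U (nhds x₀) := hx₀
  have hy₀t : Filter.Tendsto (fun g => (q g).2) U (nhds y₀) := hy₀
  -- the limits are not in A₁
  have hlim : ∀ (z : G → W₁) (z₀ : W₁), Filter.Tendsto z U (nhds z₀) →
      (∀ g ∈ S, z g ∈ g • K) → z₀ ∉ A₁ := by
    intro z z₀ hz hzK hz₀A
    obtain ⟨L, hLc, hz₀L, hLA⟩ := exists_compact_subset hA₁open hz₀A
    have h1 : {g : G | z g ∈ L} ∈ U :=
      hz (mem_interior_iff_mem_nhds.mp hz₀L)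
    have h2 : {g : G | ((g • K) ∩ L).Nonempty}ᶜ ∈ U :=
      hUfin _ (hpd₁ K L hK hLc hKA hLA)
    have h3 : {g : G | z g ∈ L} ∩ {g : G | ((g • K) ∩ L).Nonempty}ᶜ ∩ S ∈ U :=
      Filter.inter_mem (Filter.inter_mem h1 h2) hUS
    obtain ⟨g, ⟨hgL, hgne⟩, hgS⟩ := Filter.nonempty_of_mem h3
    exact hgne ⟨z g, hzK g hgS, hgL⟩
  have hx₀A : x₀ ∉ A₁ := hlim _ _ hx₀t fun g hg => (hq g hg).1
  have hy₀A : y₀ ∉ A₁ := hlim _ _ hy₀t fun g hg => (hq g hg).2.1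
  -- f(K) is compact and contained in A₂
  have hfK : IsCompact (f '' K) := hK.image hfc
  have hfKA : f '' K ⊆ A₂ := (Set.image_mono (f := f) hKA).trans hfA
  have himg : ∀ g : G, f '' (g • K) = g • (f '' K) := by
    intro g
    ext w
    simp only [Set.mem_image, Set.mem_smul_set]
    constructor
    · rintro ⟨z, ⟨k, hk, rfl⟩, rfl⟩
      exact ⟨f k, ⟨k, hk, rfl⟩, (hfe g k).symm⟩
    · rintro ⟨w', ⟨k, hk, rfl⟩, rfl⟩
      exact ⟨g • k, ⟨k, hk, rfl⟩, hfe g k⟩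
  -- f x₀ = f y₀
  have hff : f x₀ = f y₀ := by
    apply eq_of_uniformity_basis uniformity_hasBasis_closed
    rintro v ⟨hv, hvc⟩
    have hfsmall : {g : G | ¬(g • (f '' K)) ×ˢ (g • (f '' K)) ⊆ v}ᶜ ∈ U :=
      hUfin _ (hp₂ v hv (f '' K) hfK hfKA)
    have hmem : ∀ᶠ g in (U : Filter G), (f (q g).1, f (q g).2) ∈ v := by
      filter_upwards [hfsmall, hUS] with g hgv hgS
      have h1 : f (q g).1 ∈ g • (f '' K) := by
        rw [← himg]; exact ⟨(q g).1, (hq g hgS).1, rfl⟩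
      have h2 : f (q g).2 ∈ g • (f '' K) := by
        rw [← himg]; exact ⟨(q g).2, (hq g hgS).2.1, rfl⟩
      exact not_not.mp hgv (Set.mk_mem_prod h1 h2)
    have htend : Filter.Tendsto (fun g => (f (q g).1, f (q g).2)) U
        (nhds (f x₀, f y₀)) :=
      ((hfc.tendsto x₀).comp hx₀t).prodMk_nhds ((hfc.tendsto y₀).comp hy₀t)
    have := mem_closure_of_tendsto htend hmem
    rwa [hvc.closure_eq] at this
  -- hence x₀ = y₀
  have hxy : x₀ = y₀ := hfinj hx₀A hy₀A hff
  -- contradiction with q g ∉ u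
  have htend : Filter.Tendsto (fun g => ((q g).1, (q g).2)) U (nhds (x₀, y₀)) :=
    hx₀t.prodMk_nhds hy₀t
  have hu' : u ∈ nhds (x₀, y₀) := by
    rw [hxy]; exact nhds_le_uniformity y₀ hu
  have hev : ∀ᶠ g in (U : Filter G), ((q g).1, (q g).2) ∈ u := htend hu'
  obtain ⟨g, hgu, hgS⟩ := Filter.nonempty_of_mem (Filter.inter_mem hev hUS)
  exact (hq g hgS).2.2 (by simpa using hgu)
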